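/- Let p be an odd prime, n a nonnegative integer, and k, N positive integers with k ≥ N. Then 2^{2n} * sum_{i=0}^{φ(p^N)-1} D_{2n}^{(-k-i)} ≡ (-1)^n * T_{2n+1} * φ(p^N) (mod p^N), where T_{2n+1} are the tangent numbers and φ is Euler's totient function. -/

import Mathlib

open Finset

/-- Stirling numbers of the second kind, defined by the recursion
`S(0,0)=1`, `S(n,0)=S(0,m)=0` for `n,m ≥ 1`, `S(n+1,m+1)=S(n,m)+(m+1)*S(n,m+1)`. -/
def stirling2 : ℕ → ℕ → ℕ
  | 0, 0 => 1
  | 0, _ + 1 => 0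
  | _ + 1, 0 => 0
  | n + 1, m + 1 => stirling2 n m + (m + 1) * stirling2 n (m + 1)
/-- The polycosecant numbers with nonpositive upper index:
`Dneg n k = D_{2n}^{(-k)} = ∑_{i=1}^{min(2n+1,k)} (i!(i-1)!/2^{i-1}) S(k,i) S(2n+1,i)`. -/
noncomputable def Dneg (n k : ℕ) : ℝ :=
  ∑ i ∈ Finset.Icc 1 (min (2 * n + 1) k),
    (Nat.factorial i * Nat.factorial (i - 1) : ℝ) / 2 ^ (i - 1) *
      (stirling2 k i : ℝ) * (stirling2 (2 * n + 1) i : ℝ)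
/-- The tangent numbers `T_{2n+1}`, defined by `tan t = ∑_{n≥0} T_{2n+1} t^{2n+1}/(2n+1)!`,
i.e. as the Taylor coefficient `T_m = (d/dt)^m tan t |_{t=0}`. -/
noncomputable def tangentNumber (m : ℕ) : ℝ := iteratedDeriv m Real.tan 0

lemma stirling2_eq_zero : ∀ {k i : ℕ}, k < i → stirling2 k i = 0 := by
  intro k
  induction k with
  | zero => intro i hi; match i, hi with | i+1, _ => rfl
  | succ n ih =>
    intro i hi
    match i, hi with
    | m+1, hi =>
      show stirling2 n m + (m + 1) * stirling2 n (m + 1) = 0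
      rw [ih (by omega), ih (by omega)]; ring

def Fsum (κ i : ℕ) : ℤ := ∑ j ∈ range (i+1), (-1)^(i+j) * (i.choose j) * (j : ℤ)^κ

lemma Fsum_pascal (κ i : ℕ) :
    Fsum κ (i+1) + Fsum κ i = ∑ l ∈ range (i+1), (-1)^(i+l) * (i.choose l) * ((l:ℤ)+1)^κ := by
  have h1 : Fsum κ (i+1) = (∑ l ∈ range (i+1),
      (-1:ℤ)^(i+l) * ((i.choose l : ℤ) + i.choose (l+1)) * ((l:ℤ)+1)^κ) + (-1)^(i+1) * 0^κ := by
    rw [Fsum, sum_range_succ' (fun j => (-1:ℤ)^(i+1+j) * ((i+1).choose j) * (j:ℤ)^κ) (i+1)]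
    congr 1
    · refine sum_congr rfl fun l _ => ?_
      rw [Nat.choose_succ_succ]
      have hs : (-1:ℤ)^(i+1+(l+1)) = (-1)^(i+l) := by
        rw [show i+1+(l+1) = (i+l)+2 by ring, pow_add]; ring
      rw [hs]; push_cast; ring
    · simp
  have h2 : Fsum κ i = (∑ l ∈ range (i+1),
      (-1:ℤ)^(i+l+1) * (i.choose (l+1):ℤ) * ((l:ℤ)+1)^κ) + (-1)^i * 0^κ := by
    rw [Fsum, sum_range_succ' (fun j => (-1:ℤ)^(i+j) * (i.choose j) * (j:ℤ)^κ) i]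
    rw [sum_range_succ (fun l => (-1:ℤ)^(i+l+1) * (i.choose (l+1):ℤ) * ((l:ℤ)+1)^κ) i]
    rw [Nat.choose_succ_self]
    have hz : ((-1:ℤ)^(i+i+1) * ((0:ℕ):ℤ) * ((i:ℤ)+1)^κ) = 0 := by simp
    rw [hz, add_zero]
    have he : ∀ l ∈ range i, (-1:ℤ)^(i+(l+1)) * (i.choose (l+1):ℤ) * ((l+1:ℕ):ℤ)^κ
        = (-1:ℤ)^(i+l+1) * (i.choose (l+1):ℤ) * ((l:ℤ)+1)^κ := by
      intro l _; rw [← Nat.add_assoc]; push_cast; ring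
    rw [sum_congr rfl he]
    simp
  have hsgn : ((-1:ℤ)^(i+1) * 0^κ) + ((-1:ℤ)^i * 0^κ) = 0 := by rw [pow_succ]; ring
  have hterm : ∀ l ∈ range (i+1),
      (-1:ℤ)^(i+l) * ((i.choose l : ℤ) + i.choose (l+1)) * ((l:ℤ)+1)^κ
      + (-1:ℤ)^(i+l+1) * (i.choose (l+1):ℤ) * ((l:ℤ)+1)^κ
      = (-1)^(i+l) * (i.choose l) * ((l:ℤ)+1)^κ := by
    intro l _; rw [pow_succ]; ring
  rw [h1, h2, add_add_add_comm, ← sum_add_distrib, sum_congr rfl hterm, hsgn, add_zero]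

lemma fact_stirling : ∀ (κ i : ℕ), (i.factorial : ℤ) * stirling2 κ i = Fsum κ i := by
  intro κ
  induction κ with
  | zero =>
    intro i
    have h : Fsum 0 i = (-1:ℤ)^i * ∑ j ∈ range (i+1), (-1:ℤ)^j * (i.choose j : ℤ) := by
      rw [Fsum, mul_sum]
      refine sum_congr rfl fun j _ => ?_
      rw [pow_zero, pow_add]; ring
    rw [h, Int.alternating_sum_range_choose]
    cases i with
    | zero => simp [stirling2]
    | succ m => simp [stirling2, stirling2_eq_zero (Nat.lt_succ_self m)]
  | succ κ ih =>
    intro i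
    cases i with
    | zero => simp [Fsum, stirling2]
    | succ i' =>
      have hG : ((i'+1).factorial : ℤ) * stirling2 (κ+1) (i'+1)
          = ((i':ℤ)+1) * (Fsum κ (i'+1) + Fsum κ i') := by
        rw [← ih, ← ih]
        show ((i'+1).factorial : ℤ) * ((stirling2 κ i' + (i'+1) * stirling2 κ (i'+1) : ℕ) : ℤ) = _
        rw [Nat.factorial_succ]
        push_cast
        ring
      rw [hG, Fsum_pascal]
      rw [Fsum, sum_range_succ' (fun j => (-1:ℤ)^(i'+1+j) * ((i'+1).choose j) * (j:ℤ)^(κ+1)) (i'+1)]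
      rw [mul_sum]
      have h0 : ((-1:ℤ))^(i'+1+0) * (((i'+1).choose 0 : ℕ) : ℤ) * ((0:ℕ):ℤ)^(κ+1) = 0 := by simp
      rw [h0, add_zero]
      refine (sum_congr rfl fun l _ => ?_).symm
      have hc : (((i'+1).choose (l+1) : ℕ) : ℤ) * ((l:ℤ)+1) = ((i':ℤ)+1) * (i'.choose l : ℤ) := by
        have h := Nat.add_one_mul_choose_eq i' l
        have h' : ((i'+1) * i'.choose l : ℕ) = ((i'+1).choose (l+1) * (l+1) : ℕ) := h
        exact_mod_cast h'.symm
      have hs : (-1:ℤ)^(i'+1+(l+1)) = (-1)^(i'+l) := by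
        rw [show i'+1+(l+1) = (i'+l)+2 by ring, pow_add]; ring
      calc (-1:ℤ)^(i'+1+(l+1)) * (((i'+1).choose (l+1):ℕ):ℤ) * (((l+1:ℕ)):ℤ)^(κ+1)
          = (-1:ℤ)^(i'+l) * ((((i'+1).choose (l+1) : ℕ):ℤ) * ((l:ℤ)+1)) * ((l:ℤ)+1)^κ := by
            rw [hs]; push_cast; ring
        _ = ((i':ℤ)+1) * ((-1:ℤ)^(i'+l) * (i'.choose l) * ((l:ℤ)+1)^κ) := by
            rw [hc]; ring

/-! ## Geometric sums and totient congruences -/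

def SgeoZ (r : ℕ) (x : ℤ) : ℤ := ∑ t ∈ range r, x ^ t

lemma sum_range_add'' (f : ℕ → ℤ) (a b : ℕ) :
    ∑ t ∈ range (a + b), f t = ∑ t ∈ range a, f t + ∑ t ∈ range b, f (a + t) := by
  induction b with
  | zero => simp
  | succ b ih => rw [← Nat.add_assoc, sum_range_succ, ih, sum_range_succ]; ring

lemma geom_block (x : ℤ) (a b : ℕ) :
    SgeoZ (a * b) x = (∑ u ∈ range a, (x ^ b) ^ u) * SgeoZ b x := by
  induction a with
  | zero => simp [SgeoZ]
  | succ a ih =>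
    rw [Nat.succ_mul, SgeoZ, sum_range_add'', ← SgeoZ, ih, sum_range_succ, add_mul]
    congr 1
    rw [SgeoZ, mul_sum]
    refine sum_congr rfl fun t _ => ?_
    rw [← pow_mul, ← pow_add, Nat.mul_comm]

lemma lemA {p : ℕ} (hp : p.Prime) (hodd : Odd p) (J : ℤ) (hJ : (p:ℤ) ∣ J - 1) :
    (p:ℤ) * (J - 1) ∣ SgeoZ p J - p := by
  haveI : Fact p.Prime := ⟨hp⟩
  have h1 : SgeoZ p J - p = (∑ t ∈ range p, SgeoZ t J) * (J - 1) := by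
    rw [SgeoZ, sum_mul]
    have : ∀ t ∈ range p, SgeoZ t J * (J - 1) = J ^ t - 1 := fun t _ => geom_sum_mul J t
    rw [sum_congr rfl this, sum_sub_distrib]
    simp [card_range]
  have hJ1 : ((J : ZMod p)) = 1 := by
    have : ((J - 1 : ℤ) : ZMod p) = 0 := (ZMod.intCast_zmod_eq_zero_iff_dvd _ p).mpr hJ
    push_cast at this
    linear_combination this
  obtain ⟨m, hm⟩ := hodd
  have hsum : (∑ t ∈ range p, t) = p * m := by
    have h2 := Finset.sum_range_id_mul_two p
    have h4 : p - 1 = 2 * m := by omega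
    have h3 : p * (p - 1) = (p * m) * 2 := by rw [h4]; ring
    rw [h3] at h2
    exact Nat.eq_of_mul_eq_mul_right (by norm_num) h2
  have hdvd : (p:ℤ) ∣ ∑ t ∈ range p, SgeoZ t J := by
    rw [← ZMod.intCast_zmod_eq_zero_iff_dvd]
    push_cast [SgeoZ]
    rw [show ((J:ZMod p)) = 1 from hJ1]
    simp only [one_pow, sum_const, card_range, nsmul_eq_mul, mul_one]
    rw [← Nat.cast_sum, hsum]
    push_cast
    simp
  rw [h1]
  exact mul_dvd_mul hdvd dvd_rfl

lemma keyTot {p : ℕ} (hp : p.Prime) (hodd : Odd p) :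
    ∀ b : ℕ, ∀ j : ℕ, (p:ℤ) ∣ (j:ℤ) - 1 →
      ((p:ℤ)^b ∣ SgeoZ ((p^(b+1)).totient) (j:ℤ)) ∧
      ((p:ℤ)^(b+1) ∣ SgeoZ ((p^(b+1)).totient) (j:ℤ) - ((p^(b+1)).totient : ℤ)) := by
  haveI : Fact p.Prime := ⟨hp⟩
  have hpj : ∀ j : ℕ, (p:ℤ) ∣ (j:ℤ) - 1 → ¬ p ∣ j := by
    intro j hj hdvd
    have h0 : ((j:ℤ) : ZMod p) = 0 := by
      rw [← ZMod.intCast_zmod_eq_zero_iff_dvd] at *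
      push_cast
      exact_mod_cast (ZMod.natCast_eq_zero_iff j p).mpr hdvd
    have h1 : ((j:ℤ) : ZMod p) = 1 := by
      have : ((j - 1 : ℤ) : ZMod p) = 0 := (ZMod.intCast_zmod_eq_zero_iff_dvd _ p).mpr hj
      push_cast at this ⊢
      linear_combination this
    rw [h0] at h1
    exact zero_ne_one h1
  intro b
  induction b with
  | zero =>
    intro j hj
    refine ⟨one_dvd _, ?_⟩
    rw [pow_one, pow_one, Nat.totient_prime hp]
    rw [← ZMod.intCast_zmod_eq_zero_iff_dvd]
    have hJ1 : ((j:ℕ) : ZMod p) = 1 := by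
      have : ((j - 1 : ℤ) : ZMod p) = 0 := (ZMod.intCast_zmod_eq_zero_iff_dvd _ p).mpr hj
      push_cast at this ⊢
      linear_combination this
    push_cast [SgeoZ]
    rw [hJ1]
    simp
  | succ b ih =>
    intro j hj
    obtain ⟨ihS, ihT⟩ := ih j hj
    have hφ : (p^(b+2)).totient = p * (p^(b+1)).totient := by
      rw [Nat.totient_prime_pow hp (show 0 < b+2 by omega),
        Nat.totient_prime_pow hp (show 0 < b+1 by omega)]
      have e1 : b+2-1 = b+1 := by omega
      have e2 : b+1-1 = b := by omega
      rw [e1, e2, pow_succ]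
      ring
    set φ1 := (p^(b+1)).totient with hφ1
    have hcop : Nat.Coprime j (p^(b+1)) := Nat.Coprime.pow_right _
      ((Nat.coprime_comm.mp ((Nat.Prime.coprime_iff_not_dvd hp).mpr (hpj j hj))))
    have hEuler : ((p:ℤ))^(b+1) ∣ (j:ℤ)^φ1 - 1 := by
      have := (Nat.modEq_iff_dvd.mp (Nat.ModEq.pow_totient hcop).symm)
      push_cast at this ⊢
      exact_mod_cast this
    set J : ℤ := (j:ℤ)^φ1 with hJdef
    have hpJ1 : (p:ℤ) ∣ J - 1 := dvd_trans (dvd_pow_self (p:ℤ) (Nat.succ_ne_zero b)) hEuler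
    have hA : (p:ℤ)^(b+2) ∣ SgeoZ p J - p := by
      have h := lemA hp hodd J hpJ1
      have : (p:ℤ)^(b+2) ∣ (p:ℤ) * (J - 1) := by
        rw [show ((p:ℤ))^(b+2) = p * (p:ℤ)^(b+1) by ring]
        exact mul_dvd_mul_left _ hEuler
      exact dvd_trans this h
    have hblock : SgeoZ ((p^(b+2)).totient) (j:ℤ) = SgeoZ p J * SgeoZ φ1 (j:ℤ) := by
      rw [hφ, geom_block]
      rfl
    constructor
    · rw [hblock]
      have : SgeoZ p J * SgeoZ φ1 (j:ℤ)
          = (SgeoZ p J - p) * SgeoZ φ1 (j:ℤ) + p * SgeoZ φ1 (j:ℤ) := by ring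
      rw [this]
      refine dvd_add (dvd_trans ?_ (Dvd.dvd.mul_right hA _)) ?_
      · exact pow_dvd_pow _ (by omega)
      · rw [show ((p:ℤ))^(b+1) = p * (p:ℤ)^b by ring]
        exact mul_dvd_mul_left _ ihS
    · rw [hblock, hφ]
      have : SgeoZ p J * SgeoZ φ1 (j:ℤ) - ((p * φ1 : ℕ) : ℤ)
          = (SgeoZ p J - p) * SgeoZ φ1 (j:ℤ) + p * (SgeoZ φ1 (j:ℤ) - φ1) := by
        push_cast; ring
      rw [this]
      refine dvd_add (dvd_trans (pow_dvd_pow _ (le_refl _)) (Dvd.dvd.mul_right hA _)) ?_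
      rw [show ((p:ℤ))^(b+2) = p * (p:ℤ)^(b+1) by ring]
      exact mul_dvd_mul_left _ ihT

lemma castZMod_one {p : ℕ} (j : ℕ) (h : (p:ℤ) ∣ (j:ℤ) - 1) : ((j:ℕ) : ZMod p) = 1 := by
  have : ((j - 1 : ℤ) : ZMod p) = 0 := (ZMod.intCast_zmod_eq_zero_iff_dvd _ p).mpr h
  push_cast at this
  linear_combination this

lemma one_castZMod {p : ℕ} (j : ℕ) (h : ((j:ℕ) : ZMod p) = 1) : (p:ℤ) ∣ (j:ℤ) - 1 := by
  rw [← ZMod.intCast_zmod_eq_zero_iff_dvd]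
  push_cast
  rw [h]
  ring

lemma L2 {p : ℕ} (hp : p.Prime) (hodd : Odd p) {N k : ℕ} (hN : 0 < N) (hkN : N ≤ k) (j : ℕ) :
    (p:ℤ)^N ∣ (∑ t ∈ range ((p^N).totient), (j:ℤ)^(k+t))
      - (if ((j:ℕ) : ZMod p) = 1 then ((p^N).totient : ℤ) else 0) := by
  haveI : Fact p.Prime := ⟨hp⟩
  set φ := (p^N).totient with hφdef
  have hsplit : (∑ t ∈ range φ, (j:ℤ)^(k+t)) = (j:ℤ)^k * SgeoZ φ (j:ℤ) := by
    rw [SgeoZ, mul_sum]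
    exact sum_congr rfl fun t _ => pow_add _ _ _
  by_cases h1 : ((j:ℕ) : ZMod p) = 1
  · rw [if_pos h1, hsplit]
    have hj : (p:ℤ) ∣ (j:ℤ) - 1 := one_castZMod j h1
    obtain ⟨hS, hT⟩ := keyTot hp hodd (N-1) j hj
    have eN : N - 1 + 1 = N := by omega
    rw [eN] at hS hT
    have hjk : (p:ℤ) ∣ (j:ℤ)^k - 1 := by
      rw [← ZMod.intCast_zmod_eq_zero_iff_dvd]
      push_cast
      rw [h1]
      simp
    have h2 : (p:ℤ)^N ∣ ((j:ℤ)^k - 1) * SgeoZ φ (j:ℤ) := by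
      rw [show N = 1 + (N-1) by omega, pow_add, pow_one]
      exact mul_dvd_mul hjk hS
    have hre : (j:ℤ)^k * SgeoZ φ (j:ℤ) - (φ:ℤ)
        = ((j:ℤ)^k - 1) * SgeoZ φ (j:ℤ) + (SgeoZ φ (j:ℤ) - (φ:ℤ)) := by ring
    rw [hre]
    exact dvd_add h2 hT
  · rw [if_neg h1, sub_zero, hsplit]
    by_cases h2 : p ∣ j
    · have hd : (p:ℤ)^N ∣ (j:ℤ)^k :=
        dvd_trans (pow_dvd_pow_of_dvd (Int.natCast_dvd_natCast.mpr h2) N) (pow_dvd_pow _ hkN)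
      exact Dvd.dvd.mul_right hd _
    · have hcop : Nat.Coprime j (p^N) := Nat.Coprime.pow_right _
        (Nat.coprime_comm.mp ((Nat.Prime.coprime_iff_not_dvd hp).mpr h2))
      have hEuler : (p:ℤ)^N ∣ (j:ℤ)^φ - 1 := by
        have h := Nat.modEq_iff_dvd.mp (Nat.ModEq.pow_totient hcop).symm
        push_cast at h ⊢
        exact_mod_cast h
      have hgeom : SgeoZ φ (j:ℤ) * ((j:ℤ) - 1) = (j:ℤ)^φ - 1 := geom_sum_mul _ _
      have hnd : ¬ (p:ℤ) ∣ (j:ℤ) - 1 := fun hd => h1 (castZMod_one j hd)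
      have hco : IsCoprime ((p:ℤ)^N) ((j:ℤ) - 1) :=
        IsCoprime.pow_left ((Prime.coprime_iff_not_dvd (Nat.prime_iff_prime_int.mp hp)).mpr hnd)
      have hdvdS : (p:ℤ)^N ∣ SgeoZ φ (j:ℤ) :=
        hco.dvd_of_dvd_mul_right (by rw [hgeom]; exact hEuler)
      exact Dvd.dvd.mul_left hdvdS _

def Asum (p i : ℕ) : ℤ :=
  ∑ j ∈ (range (i+1)).filter (fun j => ((j:ℕ) : ZMod p) = 1), (-1:ℤ)^(i+j) * (i.choose j)

lemma L3 {p N k : ℕ} (hp : p.Prime) (hodd : Odd p) (hN : 0 < N) (hkN : N ≤ k) (i : ℕ) :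
    (p:ℤ)^N ∣ (i.factorial : ℤ) * (∑ t ∈ range ((p^N).totient), (stirling2 (k+t) i : ℤ))
      - ((p^N).totient : ℤ) * Asum p i := by
  set φ := (p^N).totient with hφdef
  have h1 : (i.factorial : ℤ) * (∑ t ∈ range φ, (stirling2 (k+t) i : ℤ))
      = ∑ j ∈ range (i+1), (-1:ℤ)^(i+j) * (i.choose j) * (∑ t ∈ range φ, (j:ℤ)^(k+t)) := by
    rw [mul_sum]
    have hc : ∀ t ∈ range φ, (i.factorial:ℤ) * (stirling2 (k+t) i : ℤ) = Fsum (k+t) i :=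
      fun t _ => fact_stirling _ _
    rw [sum_congr rfl hc]
    simp only [Fsum]
    rw [Finset.sum_comm]
    exact sum_congr rfl fun j _ => (mul_sum _ _ _).symm
  have h2 : (φ:ℤ) * Asum p i
      = ∑ j ∈ range (i+1), (-1:ℤ)^(i+j) * (i.choose j)
          * (if ((j:ℕ) : ZMod p) = 1 then (φ:ℤ) else 0) := by
    rw [Asum, mul_sum, sum_filter]
    refine sum_congr rfl fun j _ => ?_
    split_ifs <;> ring
  rw [h1, h2, ← sum_sub_distrib]
  refine dvd_sum fun j _ => ?_
  have h3 := L2 hp hodd hN hkN j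
  have hre : (-1:ℤ)^(i+j) * (i.choose j) * (∑ t ∈ range φ, (j:ℤ)^(k+t))
      - (-1:ℤ)^(i+j) * (i.choose j) * (if ((j:ℕ) : ZMod p) = 1 then (φ:ℤ) else 0)
      = (-1:ℤ)^(i+j) * (i.choose j) *
        ((∑ t ∈ range φ, (j:ℤ)^(k+t)) - (if ((j:ℕ) : ZMod p) = 1 then (φ:ℤ) else 0)) := by ring
  rw [hre]
  exact Dvd.dvd.mul_left h3 _

lemma L4 {p : ℕ} (hp : p.Prime) (i : ℕ) (h1 : 1 ≤ i) (h2 : i ≤ p) :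
    (range (i+1)).filter (fun j => ((j:ℕ) : ZMod p) = 1) = {1} := by
  haveI : Fact p.Prime := ⟨hp⟩
  haveI : Fact (1 < p) := ⟨hp.one_lt⟩
  ext j
  simp only [mem_filter, mem_range, mem_singleton]
  constructor
  · rintro ⟨hjr, hj⟩
    rcases Nat.lt_or_ge j p with hlt | hge
    · have hv := congrArg ZMod.val hj
      rw [ZMod.val_cast_of_lt hlt, ZMod.val_one] at hv
      exact hv
    · have hjp : j = p := by omega
      rw [hjp, ZMod.natCast_self] at hj
      exact absurd hj.symm one_ne_zero
  · intro hj
    subst hj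
    exact ⟨by omega, by push_cast; ring⟩

lemma L4' {p : ℕ} (hp : p.Prime) (i : ℕ) (h1 : 1 ≤ i) (h2 : i ≤ p) :
    Asum p i = (-1:ℤ)^(i+1) * i := by
  rw [Asum, L4 hp i h1 h2, sum_singleton, Nat.choose_one_right]

lemma L5 {p N k : ℕ} (hp : p.Prime) (hodd : Odd p) (hN : 0 < N) (hkN : N ≤ k)
    (i : ℕ) (hi : 1 ≤ i) :
    (p:ℤ)^N ∣ ((i-1).factorial : ℤ) * (i.factorial:ℤ)
        * (∑ t ∈ range ((p^N).totient), (stirling2 (k+t) i : ℤ))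
      - (-1:ℤ)^(i+1) * (i.factorial:ℤ) * (((p^N)).totient : ℤ) := by
  set φ := (p^N).totient with hφdef
  set A := Asum p i with hA
  set S := (∑ t ∈ range φ, (stirling2 (k+t) i : ℤ)) with hS
  have h3 := L3 hp hodd hN hkN i
  rw [← hφdef, ← hA, ← hS] at h3
  have hre : ((i-1).factorial : ℤ) * (i.factorial:ℤ) * S - (-1:ℤ)^(i+1) * (i.factorial:ℤ) * (φ:ℤ)
      = ((i-1).factorial : ℤ) * ((i.factorial:ℤ) * S - (φ:ℤ) * A)
        + (φ:ℤ) * (((i-1).factorial : ℤ) * A - (-1:ℤ)^(i+1) * (i.factorial:ℤ)) := by ring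
  rw [hre]
  refine dvd_add (Dvd.dvd.mul_left h3 _) ?_
  have hφval : (φ:ℤ) = (p:ℤ)^(N-1) * ((p:ℤ) - 1) := by
    rw [hφdef, Nat.totient_prime_pow hp hN]
    push_cast [Nat.cast_sub hp.one_le]
    ring
  suffices hD : (p:ℤ) ∣ ((i-1).factorial : ℤ) * A - (-1:ℤ)^(i+1) * (i.factorial:ℤ) by
    obtain ⟨e, he⟩ := hD
    refine ⟨((p:ℤ) - 1) * e, ?_⟩
    rw [hφval, he, show (p:ℤ)^N = (p:ℤ)^(N-1) * p by rw [← pow_succ]; congr 1; omega]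
    ring
  rcases le_or_gt i p with hip | hpi
  · rw [hA, L4' hp i hi hip]
    have hfac : ((i-1).factorial : ℤ) * (i:ℤ) = (i.factorial : ℤ) := by
      have := Nat.mul_factorial_pred (show i ≠ 0 by omega)
      push_cast [← this]
      ring
    have : ((i-1).factorial : ℤ) * ((-1:ℤ)^(i+1) * i) - (-1:ℤ)^(i+1) * (i.factorial:ℤ) = 0 := by
      rw [← hfac]; ring
    rw [this]
    exact dvd_zero _
  · have hp1 : (p:ℤ) ∣ ((i-1).factorial : ℤ) :=
      Int.natCast_dvd_natCast.mpr ((hp.dvd_factorial).mpr (by omega))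
    have hp2 : (p:ℤ) ∣ (i.factorial : ℤ) :=
      Int.natCast_dvd_natCast.mpr ((hp.dvd_factorial).mpr (by omega))
    exact dvd_sub (Dvd.dvd.mul_right hp1 _) (Dvd.dvd.mul_left hp2 _)

open Polynomial

noncomputable def rgen (w : Polynomial ℤ) : ℕ → Polynomial ℤ
  | 0 => X
  | m+1 => derivative (rgen w m) * w

lemma hasDerivAt_poly_comp {𝕜 : Type*} [NontriviallyNormedField 𝕜] {u : 𝕜 → 𝕜} {x d : 𝕜}
    (hu : HasDerivAt u d x) (q : Polynomial 𝕜) :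
    HasDerivAt (fun y => Polynomial.eval (u y) q) (Polynomial.eval (u x) (derivative q) * d) x :=
  HasDerivAt.comp x (Polynomial.hasDerivAt q (u x)) hu

lemma iter_deriv {𝕜 : Type*} [NontriviallyNormedField 𝕜] {u : 𝕜 → 𝕜} {s : Set 𝕜}
    (hs : IsOpen s) (w : Polynomial ℤ) (κ : 𝕜)
    (hu : ∀ x ∈ s, HasDerivAt u (κ * Polynomial.eval (u x) (w.map (Int.castRingHom 𝕜))) x) :
    ∀ m, (∀ x ∈ s, deriv^[m] u x = κ^m * Polynomial.eval (u x) ((rgen w m).map (Int.castRingHom 𝕜)))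
      ∧ (∀ x ∈ s, HasDerivAt (deriv^[m] u)
          (κ^(m+1) * Polynomial.eval (u x) ((rgen w (m+1)).map (Int.castRingHom 𝕜))) x) := by
  have hD : ∀ m, ∀ x ∈ s, HasDerivAt (fun y => κ^m * Polynomial.eval (u y) ((rgen w m).map (Int.castRingHom 𝕜)))
      (κ^(m+1) * Polynomial.eval (u x) ((rgen w (m+1)).map (Int.castRingHom 𝕜))) x := by
    intro m x hx
    have h1 := (hasDerivAt_poly_comp (hu x hx) ((rgen w m).map (Int.castRingHom 𝕜))).const_mul (κ^m)
    have h2 : κ^m * (Polynomial.eval (u x) (derivative ((rgen w m).map (Int.castRingHom 𝕜)))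
          * (κ * Polynomial.eval (u x) (w.map (Int.castRingHom 𝕜))))
        = κ^(m+1) * Polynomial.eval (u x) ((rgen w (m+1)).map (Int.castRingHom 𝕜)) := by
      rw [show rgen w (m+1) = derivative (rgen w m) * w from rfl, Polynomial.map_mul,
        Polynomial.eval_mul, ← Polynomial.derivative_map]
      ring
    rw [h2] at h1
    exact h1
  intro m
  induction m with
  | zero =>
    constructor
    · intro x hx
      simp [rgen]
    · intro x hx
      have h := hu x hx
      have e1 : rgen w 1 = w := by
        show derivative X * w = w
        rw [Polynomial.derivative_X, one_mul]
      rw [e1, pow_one]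
      exact h
  | succ m ih =>
    obtain ⟨ih1, ih2⟩ := ih
    have heq : ∀ x ∈ s, deriv^[m+1] u x
        = κ^(m+1) * Polynomial.eval (u x) ((rgen w (m+1)).map (Int.castRingHom 𝕜)) := by
      intro x hx
      rw [Function.iterate_succ_apply']
      exact (ih2 x hx).deriv
    refine ⟨heq, fun x hx => ?_⟩
    have hEv : (fun y => κ^(m+1) * Polynomial.eval (u y) ((rgen w (m+1)).map (Int.castRingHom 𝕜)))
        =ᶠ[nhds x] deriv^[m+1] u :=
      Filter.eventuallyEq_of_mem (hs.mem_nhds hx) (fun y hy => (heq y hy).symm)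
    exact (hD (m+1) x hx).congr_of_eventuallyEq hEv.symm

noncomputable def wtan : Polynomial ℤ := X^2 + 1
noncomputable def wg : Polynomial ℤ := X^2 - X

lemma eval_wtan {𝕜 : Type*} [NontriviallyNormedField 𝕜] (t : 𝕜) :
    Polynomial.eval t (wtan.map (Int.castRingHom 𝕜)) = t^2 + 1 := by
  simp [wtan]

lemma eval_wg {𝕜 : Type*} [NontriviallyNormedField 𝕜] (t : 𝕜) :
    Polynomial.eval t (wg.map (Int.castRingHom 𝕜)) = t^2 - t := by
  simp [wg]

lemma real_tan_eq (m : ℕ) :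
    iteratedDeriv m Real.tan 0 = (((rgen wtan m).coeff 0 : ℤ) : ℝ) := by
  have hs : IsOpen {x : ℝ | Real.cos x ≠ 0} :=
    isOpen_ne.preimage Real.continuous_cos
  have hu : ∀ x ∈ {x : ℝ | Real.cos x ≠ 0},
      HasDerivAt Real.tan ((1:ℝ) * Polynomial.eval (Real.tan x) (wtan.map (Int.castRingHom ℝ))) x := by
    intro x hx
    have h := Real.hasDerivAt_tan hx
    have : (1:ℝ) / Real.cos x ^ 2
        = (1:ℝ) * Polynomial.eval (Real.tan x) (wtan.map (Int.castRingHom ℝ)) := by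
      rw [eval_wtan, Real.tan_eq_sin_div_cos]
      have hc : Real.cos x ≠ 0 := hx
      field_simp
      exact (Real.sin_sq_add_cos_sq x).symm
    rwa [this] at h
  have h0 : (0:ℝ) ∈ {x : ℝ | Real.cos x ≠ 0} := by
    simp [Real.cos_zero]
  have := ((iter_deriv hs wtan 1 hu) m).1 0 h0
  rw [iteratedDeriv_eq_iterate, this, Real.tan_zero, one_pow, one_mul,
    ← Polynomial.coeff_zero_eq_eval_zero, Polynomial.coeff_map]
  rfl

lemma complex_tan_eq (m : ℕ) :
    iteratedDeriv m Complex.tan 0 = (((rgen wtan m).coeff 0 : ℤ) : ℂ) := by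
  have hs : IsOpen {x : ℂ | Complex.cos x ≠ 0} :=
    isOpen_ne.preimage Complex.continuous_cos
  have hu : ∀ x ∈ {x : ℂ | Complex.cos x ≠ 0},
      HasDerivAt Complex.tan ((1:ℂ) * Polynomial.eval (Complex.tan x) (wtan.map (Int.castRingHom ℂ))) x := by
    intro x hx
    have h := Complex.hasDerivAt_tan hx
    have : (1:ℂ) / Complex.cos x ^ 2
        = (1:ℂ) * Polynomial.eval (Complex.tan x) (wtan.map (Int.castRingHom ℂ)) := by
      rw [eval_wtan, Complex.tan_eq_sin_div_cos]
      have hc : Complex.cos x ≠ 0 := hx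
      field_simp
      exact (Complex.sin_sq_add_cos_sq x).symm
    rwa [this] at h
  have h0 : (0:ℂ) ∈ {x : ℂ | Complex.cos x ≠ 0} := by
    simp [Complex.cos_zero]
  have := ((iter_deriv hs wtan 1 hu) m).1 0 h0
  rw [iteratedDeriv_eq_iterate, this, Complex.tan_zero, one_pow, one_mul,
    ← Polynomial.coeff_zero_eq_eval_zero, Polynomial.coeff_map]
  rfl

open Complex in
noncomputable def gfun (z : ℂ) : ℂ := (1 + Complex.exp (2*z*Complex.I))⁻¹

open Complex in
lemma one_add_exp (z : ℂ) :
    1 + Complex.exp (2*z*Complex.I) = 2 * Complex.exp (z*Complex.I) * Complex.cos z := by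
  rw [Complex.cos]
  have h2 : Complex.exp (2*z*Complex.I) = Complex.exp (z*Complex.I) * Complex.exp (z*Complex.I) := by
    rw [← Complex.exp_add]; ring_nf
  have h3 : Complex.exp (-z*Complex.I) = (Complex.exp (z*Complex.I))⁻¹ := by
    rw [← Complex.exp_neg]; ring_nf
  rw [h2, h3]
  field_simp [Complex.exp_ne_zero]
  ring

open Complex in
lemma sg_iff (z : ℂ) : 1 + Complex.exp (2*z*Complex.I) ≠ 0 ↔ Complex.cos z ≠ 0 := by
  rw [one_add_exp]
  constructor
  · intro h hc; exact h (by rw [hc]; ring)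
  · intro h hc
    rcases mul_eq_zero.mp hc with h1 | h1
    · rcases mul_eq_zero.mp h1 with h2 | h2
      · exact two_ne_zero h2
      · exact Complex.exp_ne_zero _ h2
    · exact h h1

open Complex in
lemma tan_eq_gfun {z : ℂ} (hz : 1 + Complex.exp (2*z*Complex.I) ≠ 0) :
    Complex.tan z = -Complex.I + 2*Complex.I * gfun z := by
  have hc : Complex.cos z ≠ 0 := (sg_iff z).mp hz
  have he := Complex.exp_ne_zero (z*Complex.I)
  have h2 : Complex.exp (2*z*Complex.I) = Complex.exp (z*Complex.I) ^ 2 := by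
    rw [sq, ← Complex.exp_add]; ring_nf
  rw [Complex.tan_eq_sin_div_cos, gfun, h2]
  rw [div_eq_iff hc]
  have hz2 : 1 + Complex.exp (z*Complex.I)^2 ≠ 0 := by rw [← h2]; exact hz
  rw [Complex.sin, Complex.cos]
  have h3 : Complex.exp (-z*Complex.I) = (Complex.exp (z*Complex.I))⁻¹ := by
    rw [← Complex.exp_neg]; ring_nf
  rw [h3]
  field_simp
  ring

open Complex in
lemma hg_deriv : ∀ z ∈ {z : ℂ | 1 + Complex.exp (2*z*Complex.I) ≠ 0},
    HasDerivAt gfun ((2*Complex.I) * Polynomial.eval (gfun z) (wg.map (Int.castRingHom ℂ))) z := by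
  intro z hz
  have hz' : 1 + Complex.exp (2*z*Complex.I) ≠ 0 := hz
  have h1 : HasDerivAt (fun y : ℂ => 2*y*Complex.I) (2*Complex.I) z := by
    have := ((hasDerivAt_id z).const_mul (2:ℂ)).mul_const Complex.I
    simpa using this
  have h2 := (Complex.hasDerivAt_exp (2*z*Complex.I)).comp z h1
  simp only [Function.comp_def] at h2
  have h3 := (h2.const_add 1).inv hz'
  have hval : -(Complex.exp (2*z*Complex.I) * (2*Complex.I)) / (1 + Complex.exp (2*z*Complex.I)) ^ 2
      = (2*Complex.I) * Polynomial.eval (gfun z) (wg.map (Int.castRingHom ℂ)) := by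
    rw [eval_wg, gfun]
    field_simp
    ring
  rw [hval] at h3
  exact h3

open Complex in
lemma tan_g_bridge : ∀ m, ∀ z ∈ {z : ℂ | 1 + Complex.exp (2*z*Complex.I) ≠ 0},
    deriv^[m+1] Complex.tan z = 2*Complex.I * deriv^[m+1] gfun z := by
  have hs : IsOpen {z : ℂ | 1 + Complex.exp (2*z*Complex.I) ≠ 0} := by
    have : Continuous fun z : ℂ => 1 + Complex.exp (2*z*Complex.I) := by continuity
    exact isOpen_ne.preimage this
  have hiter := iter_deriv hs wg (2*Complex.I) hg_deriv
  intro m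
  induction m with
  | zero =>
    intro z hz
    have hEv : Complex.tan =ᶠ[nhds z] (fun y => -Complex.I + 2*Complex.I * gfun y) :=
      Filter.eventuallyEq_of_mem (hs.mem_nhds hz) (fun y hy => tan_eq_gfun hy)
    simp only [Function.iterate_succ_apply', Function.iterate_zero_apply]
    rw [hEv.deriv_eq, deriv_const_add, deriv_const_mul _ ((hg_deriv z hz).differentiableAt)]
  | succ m ih =>
    intro z hz
    have hEv : deriv^[m+1] Complex.tan =ᶠ[nhds z] (fun y => 2*Complex.I * deriv^[m+1] gfun y) :=
      Filter.eventuallyEq_of_mem (hs.mem_nhds hz) (fun y hy => ih y hy)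
    rw [Function.iterate_succ_apply', hEv.deriv_eq,
      deriv_const_mul _ (((hiter (m+1)).2 z hz).differentiableAt),
      Function.iterate_succ_apply' deriv (m+1) gfun]

open Complex in
lemma coeff_tan_eval (M : ℕ) (hM : 1 ≤ M) :
    (((rgen wtan M).coeff 0 : ℤ) : ℂ)
      = 2*Complex.I * ((2*Complex.I)^M
          * Polynomial.eval ((2:ℂ)⁻¹) ((rgen wg M).map (Int.castRingHom ℂ))) := by
  have hs : IsOpen {z : ℂ | 1 + Complex.exp (2*z*Complex.I) ≠ 0} := by
    have : Continuous fun z : ℂ => 1 + Complex.exp (2*z*Complex.I) := by continuity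
    exact isOpen_ne.preimage this
  have h0 : (0:ℂ) ∈ {z : ℂ | 1 + Complex.exp (2*z*Complex.I) ≠ 0} := by
    show 1 + Complex.exp (2*0*Complex.I) ≠ 0
    norm_num
  have hiter := iter_deriv hs wg (2*Complex.I) hg_deriv
  obtain ⟨m, rfl⟩ : ∃ m, M = m + 1 := ⟨M - 1, by omega⟩
  have hb := tan_g_bridge m 0 h0
  have hg0 : gfun 0 = (2:ℂ)⁻¹ := by
    rw [gfun]
    norm_num
  have hgv := (hiter (m+1)).1 0 h0
  rw [hg0] at hgv
  rw [← complex_tan_eq, iteratedDeriv_eq_iterate, hb, hgv]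

lemma stirling2_zero_right (m : ℕ) : stirling2 (m+1) 0 = 0 := rfl
lemma stirling2_succ (m i : ℕ) :
    stirling2 (m+1) (i+1) = stirling2 m i + (i+1) * stirling2 m (i+1) := rfl

lemma rg_coeff : ∀ m : ℕ, (rgen wg m).coeff 0 = 0 ∧ ∀ i : ℕ, (rgen wg m).coeff (i+1)
    = (-1:ℤ)^(m+i) * ((i.factorial : ℤ) * (stirling2 m i : ℤ)
        + ((i+1).factorial : ℤ) * (stirling2 m (i+1) : ℤ)) := by
  have hsplit : ∀ p : Polynomial ℤ, p * wg = p*Polynomial.X*Polynomial.X - p*Polynomial.X := by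
    intro p; rw [wg]; ring
  intro m
  induction m with
  | zero =>
    constructor
    · show (Polynomial.X : Polynomial ℤ).coeff 0 = 0
      simp
    · intro i
      show (Polynomial.X : Polynomial ℤ).coeff (i+1) = _
      cases i with
      | zero => simp [stirling2]
      | succ i' => simp [Polynomial.coeff_X, stirling2_eq_zero (show 0 < i'+1 by omega),
          stirling2_eq_zero (show 0 < i'+2 by omega)]
  | succ m ih =>
    obtain ⟨ih0, ih1⟩ := ih
    have hq : ∀ j, (Polynomial.derivative (rgen wg m)).coeff j = (rgen wg m).coeff (j+1) * (j+1) :=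
      fun j => Polynomial.coeff_derivative _ j
    have hrw : rgen wg (m+1) = Polynomial.derivative (rgen wg m) * Polynomial.X * Polynomial.X
        - Polynomial.derivative (rgen wg m) * Polynomial.X := by
      show Polynomial.derivative (rgen wg m) * wg = _
      exact hsplit _
    constructor
    · rw [hrw, Polynomial.coeff_sub, Polynomial.coeff_mul_X_zero, Polynomial.coeff_mul_X_zero,
        sub_zero]
    · intro i
      cases i with
      | zero =>
        rw [hrw, Polynomial.coeff_sub, Polynomial.coeff_mul_X, Polynomial.coeff_mul_X_zero,
          zero_sub, Polynomial.coeff_mul_X, hq, ih1 0]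
        rw [stirling2_succ, stirling2_zero_right]
        push_cast [pow_succ, Nat.factorial]
        ring
      | succ i' =>
        rw [hrw, Polynomial.coeff_sub, Polynomial.coeff_mul_X, Polynomial.coeff_mul_X,
          Polynomial.coeff_mul_X, hq, hq, ih1, ih1]
        rw [stirling2_succ, stirling2_succ]
        have e1 : (-1:ℤ)^(m+(i'+1)) = -(-1:ℤ)^(m+i') := by
          rw [← Nat.add_assoc, pow_succ]; ring
        have e2 : (-1:ℤ)^((m+1)+(i'+1)) = (-1:ℤ)^(m+i') := by
          rw [show (m+1)+(i'+1) = (m+i')+2 by ring, pow_add]; ring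
        rw [e1, e2]
        push_cast [Nat.factorial_succ]
        ring

def WZ (m : ℕ) : ℤ :=
  ∑ i ∈ range (m+1), (-1:ℤ)^(i+1) * 2^(m-i) * (i.factorial : ℤ) * (stirling2 m i : ℤ)

lemma rgen_natDegree (m : ℕ) : (rgen wg m).natDegree ≤ m + 1 := by
  induction m with
  | zero =>
    show (Polynomial.X : Polynomial ℤ).natDegree ≤ 1
    simp
  | succ m ih =>
    show (Polynomial.derivative (rgen wg m) * wg).natDegree ≤ m+2
    refine le_trans Polynomial.natDegree_mul_le ?_
    have h1 := Polynomial.natDegree_derivative_le (rgen wg m)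
    have h2 : (wg).natDegree ≤ 2 := by
      rw [wg]
      refine le_trans (Polynomial.natDegree_sub_le _ _) ?_
      simp
    omega

lemma coeff_tan_VZ (n : ℕ) :
    ((rgen wtan (2*n+1)).coeff 0)
      = (-1:ℤ)^(n+1) * ∑ i ∈ range (2*n+3), (rgen wg (2*n+1)).coeff i * 2^(2*n+2-i) := by
  have h1 := coeff_tan_eval (2*n+1) (by omega)
  have hdeg : ((rgen wg (2*n+1)).map (Int.castRingHom ℂ)).natDegree < (2*n+1)+2 :=
    lt_of_le_of_lt (le_trans Polynomial.natDegree_map_le (rgen_natDegree (2*n+1))) (by omega)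
  rw [Polynomial.eval_eq_sum_range' hdeg] at h1
  have h2 : (2*Complex.I) * ((2*Complex.I)^(2*n+1) * ∑ i ∈ range ((2*n+1)+2),
        ((rgen wg (2*n+1)).map (Int.castRingHom ℂ)).coeff i * ((2:ℂ)⁻¹)^i)
      = Complex.I^((2*n+1)+1) * ∑ i ∈ range ((2*n+1)+2),
          (((rgen wg (2*n+1)).coeff i : ℤ) : ℂ) * (2:ℂ)^((2*n+1)+1-i) := by
    rw [mul_sum, mul_sum, mul_sum]
    refine sum_congr rfl fun i hi => ?_
    have hile : i ≤ (2*n+1)+1 := by have := mem_range.mp hi; omega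
    have hp : (2:ℂ)^((2*n+1)+1) * ((2:ℂ)⁻¹)^i = (2:ℂ)^((2*n+1)+1-i) := by
      rw [inv_pow, show (2*n+1)+1 = ((2*n+1)+1-i)+i by omega, pow_add]
      have : (2:ℂ)^i ≠ 0 := pow_ne_zero _ two_ne_zero
      field_simp
      rw [Nat.add_sub_cancel]
    rw [Polynomial.coeff_map, eq_intCast]
    rw [← hp, mul_pow]
    push_cast
    ring
  rw [h2] at h1
  have h3 : Complex.I^((2*n+1)+1) = (((-1:ℤ)^(n+1) : ℤ) : ℂ) := by
    rw [show (2*n+1)+1 = 2*(n+1) by ring, pow_mul, Complex.I_sq]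
    push_cast
    ring
  rw [h3] at h1
  have h4 : (((rgen wtan (2*n+1)).coeff 0 : ℤ) : ℂ)
      = ((((-1:ℤ)^(n+1) * ∑ i ∈ range (2*n+3), (rgen wg (2*n+1)).coeff i * 2^(2*n+2-i)) : ℤ) : ℂ) := by
    rw [h1]
    push_cast
    rw [show (2*n+1)+2 = 2*n+3 by ring]
  exact_mod_cast h4

lemma VZ_eq (m' : ℕ) :
    ∑ i ∈ range ((m'+1)+2), (rgen wg (m'+1)).coeff i * 2^((m'+1)+1-i)
    = - ∑ i ∈ range ((m'+1)+1), (-1:ℤ)^((m'+1)+i) * 2^((m'+1)-i)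
        * (i.factorial:ℤ) * (stirling2 (m'+1) i : ℤ) := by
  set m := m'+1 with hm
  obtain ⟨h0, h1⟩ := rg_coeff m
  rw [sum_range_succ' (fun i => (rgen wg m).coeff i * 2^(m+1-i)) (m+1)]
  rw [h0, zero_mul, add_zero]
  have hstep : ∀ i ∈ range (m+1), (rgen wg m).coeff (i+1) * 2^(m+1-(i+1))
      = (-1:ℤ)^(m+i) * 2^(m-i) * (i.factorial:ℤ) * (stirling2 m i : ℤ)
        + (-1:ℤ)^(m+i) * 2^(m-i) * ((i+1).factorial:ℤ) * (stirling2 m (i+1) : ℤ) := by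
    intro i hi
    rw [h1 i, show m+1-(i+1) = m-i by omega]
    ring
  rw [sum_congr rfl hstep, sum_add_distrib]
  have hB : (∑ i ∈ range (m+1), (-1:ℤ)^(m+i) * 2^(m-i) * ((i+1).factorial:ℤ) * (stirling2 m (i+1) : ℤ))
      = -2 * ∑ i ∈ range (m+1), (-1:ℤ)^(m+i) * 2^(m-i) * (i.factorial:ℤ) * (stirling2 m i : ℤ) := by
    have hh : ∀ i ∈ range (m+1), (-1:ℤ)^(m+i) * 2^(m-i) * ((i+1).factorial:ℤ) * (stirling2 m (i+1) : ℤ)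
        = (fun j => (-1:ℤ)^(m+j+1) * 2^(m+1-j) * (j.factorial:ℤ) * (stirling2 m j : ℤ)) (i+1) := by
      intro i hi
      show _ = (-1:ℤ)^(m+(i+1)+1) * 2^(m+1-(i+1)) * ((i+1).factorial:ℤ) * (stirling2 m (i+1) : ℤ)
      rw [show m+(i+1)+1 = (m+i)+2 by ring, pow_add, show m+1-(i+1) = m-i by omega]
      ring
    rw [sum_congr rfl hh]
    have hsrs := sum_range_succ' (fun j => (-1:ℤ)^(m+j+1) * 2^(m+1-j) * (j.factorial:ℤ) * (stirling2 m j : ℤ)) (m+1)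
    have hz0 : (-1:ℤ)^(m+0+1) * 2^(m+1-0) * ((0:ℕ).factorial:ℤ) * (stirling2 m 0 : ℤ) = 0 := by
      rw [hm, stirling2_zero_right]
      push_cast
      ring
    have hztop : (-1:ℤ)^(m+(m+1)+1) * 2^(m+1-(m+1)) * ((m+1).factorial:ℤ) * (stirling2 m (m+1) : ℤ) = 0 := by
      rw [stirling2_eq_zero (by omega)]
      push_cast
      ring
    rw [hz0, add_zero] at hsrs
    rw [← hsrs, sum_range_succ, hztop, add_zero, mul_sum]
    refine sum_congr rfl fun j hj => ?_
    have hjle : j ≤ m := by have := mem_range.mp hj; omega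
    rw [show m+1-j = (m-j)+1 by omega, pow_succ, pow_succ]
    ring
  rw [hB]
  ring

lemma tangent_coeff_WZ (n : ℕ) : ((rgen wtan (2*n+1)).coeff 0) = (-1:ℤ)^n * WZ (2*n+1) := by
  have h := VZ_eq (2*n)
  have e1 : (∑ i ∈ range (2*n+3), (rgen wg (2*n+1)).coeff i * 2^(2*n+2-i))
      = ∑ i ∈ range ((2*n+1)+2), (rgen wg (2*n+1)).coeff i * 2^((2*n+1)+1-i) := by
    refine sum_congr (congrArg _ (by omega)) fun i hi => ?_
    rw [show (2*n+1)+1-i = 2*n+2-i by omega]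
  rw [coeff_tan_VZ n, e1, h, WZ]
  have e2 : ∀ i ∈ range ((2*n+1)+1),
      (-1:ℤ)^((2*n+1)+i) * 2^((2*n+1)-i) * (i.factorial:ℤ) * (stirling2 (2*n+1) i : ℤ)
      = (-1:ℤ)^(i+1) * 2^((2*n+1)-i) * (i.factorial:ℤ) * (stirling2 (2*n+1) i : ℤ) := by
    intro i _
    rw [show (2*n+1)+i = 2*n+(i+1) by ring, pow_add, pow_mul]
    norm_num
  rw [sum_congr rfl e2, pow_succ]
  ring

lemma WZ_Icc (m' : ℕ) : WZ (m'+1) = ∑ i ∈ Icc 1 (m'+1),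
    (-1:ℤ)^(i+1) * 2^((m'+1)-i) * (i.factorial : ℤ) * (stirling2 (m'+1) i : ℤ) := by
  rw [WZ, sum_range_succ'
    (fun i => (-1:ℤ)^(i+1) * 2^((m'+1)-i) * (i.factorial : ℤ) * (stirling2 (m'+1) i : ℤ)) (m'+1)]
  have h0 : (-1:ℤ)^(0+1) * 2^((m'+1)-0) * ((0:ℕ).factorial:ℤ) * (stirling2 (m'+1) 0 : ℤ) = 0 := by
    rw [stirling2_zero_right]
    push_cast
    ring
  rw [h0, add_zero]
  rw [show Icc 1 (m'+1) = Ico 1 ((m'+1)+1) from (Finset.Ico_add_one_right_eq_Icc _ _).symm]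
  rw [Finset.sum_Ico_eq_sum_range]
  have e : (m'+1)+1-1 = m'+1 := by omega
  rw [e]
  exact sum_congr rfl fun i _ => by rw [Nat.add_comm 1 i]


lemma Dneg_ext (n κ : ℕ) : Dneg n κ = ∑ i ∈ Finset.Icc 1 (2 * n + 1),
    (Nat.factorial i * Nat.factorial (i - 1) : ℝ) / 2 ^ (i - 1) *
      (stirling2 κ i : ℝ) * (stirling2 (2 * n + 1) i : ℝ) := by
  rw [Dneg]
  refine Finset.sum_subset (Finset.Icc_subset_Icc_right (min_le_left _ _)) ?_
  intro i hi hni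
  have h1 := Finset.mem_Icc.mp hi
  have h2 : ¬ (1 ≤ i ∧ i ≤ min (2*n+1) κ) := fun h => hni (Finset.mem_Icc.mpr h)
  have hκ : κ < i := by omega
  rw [stirling2_eq_zero hκ]
  push_cast
  ring

lemma tangent_real (n : ℕ) :
    tangentNumber (2*n+1) = (((-1:ℤ)^n * WZ (2*n+1) : ℤ) : ℝ) := by
  rw [tangentNumber, real_tan_eq, tangent_coeff_WZ]

theorem stmt16 (p n k N : ℕ) (hp : p.Prime) (hodd : Odd p) (hk : 0 < k) (hN : 0 < N)
    (hkN : N ≤ k) :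
    ∃ c : ℤ,
      2 ^ (2 * n) * ∑ i ∈ Finset.range (Nat.totient (p ^ N)), Dneg n (k + i) -
        (-1 : ℝ) ^ n * tangentNumber (2 * n + 1) * (Nat.totient (p ^ N) : ℝ) =
      (p : ℝ) ^ N * c := by
  set φ := Nat.totient (p ^ N) with hφ
  have hdvd : (p:ℤ)^N ∣ ∑ i ∈ Icc 1 (2*n+1), 2^(2*n+1-i) * (stirling2 (2*n+1) i : ℤ) *
      (((i-1).factorial : ℤ) * (i.factorial:ℤ) * (∑ t ∈ range φ, (stirling2 (k+t) i : ℤ))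
        - (-1:ℤ)^(i+1) * (i.factorial:ℤ) * (φ:ℤ)) := by
    refine dvd_sum fun i hi => ?_
    exact Dvd.dvd.mul_left (L5 hp hodd hN hkN i (Finset.mem_Icc.mp hi).1) _
  obtain ⟨c, hc⟩ := hdvd
  refine ⟨c, ?_⟩
  -- part R1
  have hR1 : (2:ℝ) ^ (2 * n) * ∑ t ∈ Finset.range φ, Dneg n (k + t)
      = ∑ i ∈ Icc 1 (2*n+1), ∑ t ∈ range φ,
          (2:ℝ)^(2*n+1-i) * ((i.factorial:ℝ) * ((i-1).factorial:ℝ))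
            * (stirling2 (k+t) i : ℝ) * (stirling2 (2*n+1) i : ℝ) := by
    rw [mul_sum]
    have hsw : ∀ t ∈ range φ, (2:ℝ)^(2*n) * Dneg n (k+t)
        = ∑ i ∈ Icc 1 (2*n+1), (2:ℝ)^(2*n+1-i) * ((i.factorial:ℝ) * ((i-1).factorial:ℝ))
            * (stirling2 (k+t) i : ℝ) * (stirling2 (2*n+1) i : ℝ) := by
      intro t _
      rw [Dneg_ext, mul_sum]
      refine sum_congr rfl fun i hi => ?_
      have h1 := Finset.mem_Icc.mp hi
      have h2 : (2:ℝ)^(2*n) = 2^(2*n+1-i) * 2^(i-1) := by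
        rw [← pow_add]
        congr 1
        omega
      have h3 : (2:ℝ)^(i-1) ≠ 0 := pow_ne_zero _ two_ne_zero
      rw [h2]
      field_simp
    rw [sum_congr rfl hsw, Finset.sum_comm]
  -- part R2
  have hR2 : (-1 : ℝ) ^ n * tangentNumber (2 * n + 1) * (φ : ℝ)
      = ∑ i ∈ Icc 1 (2*n+1),
          ((-1:ℤ)^(i+1) * 2^(2*n+1-i) * (i.factorial : ℤ) * (stirling2 (2*n+1) i : ℤ) * (φ:ℤ) : ℝ) := by
    rw [tangent_real]
    have hsq : (-1:ℝ)^n * (((-1:ℤ)^n : ℤ) : ℝ) = 1 := by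
      push_cast
      rw [← pow_add, show n + n = 2*n by ring, pow_mul]
      norm_num
    push_cast
    rw [show ((-1:ℝ)^n * ((-1:ℝ)^n * (WZ (2*n+1):ℝ))) = ((-1:ℝ)^n * (-1:ℝ)^n) * (WZ (2*n+1):ℝ) by ring]
    rw [← pow_add, show n + n = 2*n by ring, pow_mul]
    norm_num
    rw [show 2*n+1 = (2*n)+1 from rfl, WZ_Icc (2*n)]
    push_cast [Finset.sum_mul]
    exact sum_congr rfl fun i _ => by push_cast; ring
  have hcast : (∑ i ∈ Icc 1 (2*n+1), ∑ t ∈ range φ,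
          (2:ℝ)^(2*n+1-i) * ((i.factorial:ℝ) * ((i-1).factorial:ℝ))
            * (stirling2 (k+t) i : ℝ) * (stirling2 (2*n+1) i : ℝ))
      - (∑ i ∈ Icc 1 (2*n+1),
          ((-1:ℤ)^(i+1) * 2^(2*n+1-i) * (i.factorial : ℤ) * (stirling2 (2*n+1) i : ℤ) * (φ:ℤ) : ℝ))
      = ((∑ i ∈ Icc 1 (2*n+1), 2^(2*n+1-i) * (stirling2 (2*n+1) i : ℤ) *
          (((i-1).factorial : ℤ) * (i.factorial:ℤ) * (∑ t ∈ range φ, (stirling2 (k+t) i : ℤ))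
            - (-1:ℤ)^(i+1) * (i.factorial:ℤ) * (φ:ℤ)) : ℤ) : ℝ) := by
    push_cast
    rw [← sum_sub_distrib]
    refine sum_congr rfl fun i _ => ?_
    rw [mul_sub]
    congr 1
    · rw [Finset.mul_sum, Finset.mul_sum]
      exact sum_congr rfl fun t _ => by ring
    · ring
  rw [hR1, hR2, hcast, hc]
  push_cast
  ring
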